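/- Let H be a finite dimensional hereditary algebra over a field k, and let M, X be finitely generated H-modules with Ext¹(M, M) = 0. Then Hom(rej_M(X), M) = 0, where rej_M(X) = ⋂_{f : X → M} Ker f. -/

import Mathlib

open CategoryTheory

/-- `Ext¹` of finitely generated modules, as an abelian group (`ℤ`-module). -/
noncomputable def ext1 (Λ : Type) [Ring Λ] (M N : ModuleCat Λ) : ModuleCat ℤ :=
  ((Ext ℤ (ModuleCat Λ) 1).obj (Opposite.op M)).obj N

/-- The reject of `M` in `X`: the intersection of the kernels of all maps `X → M`. -/
noncomputable def reject (Λ : Type) [Ring Λ] (M X : ModuleCat Λ) : Submodule Λ X :=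
  ⨅ f : X →ₗ[Λ] M, LinearMap.ker f

open LinearMap



/-- Core extension step: if every map `ker π → M` extends to `P₀`, `Q` is projective,
and the preimage `π⁻¹(range c)` is projective, then every map `ker c → M` extends to `Q`. -/
theorem myCore {Λ : Type} {M : Type*} {P₀ : Type*} {Q : Type*} [Ring Λ] [AddCommGroup M] [Module Λ M]
    [AddCommGroup P₀] [Module Λ P₀] [AddCommGroup Q] [Module Λ Q]
    (π : P₀ →ₗ[Λ] M) (hπ : Function.Surjective π)
    (hstar : ∀ h : ker π →ₗ[Λ] M, ∃ g : P₀ →ₗ[Λ] M, ∀ x : ker π, g x = h x)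
    (hQ : Module.Projective Λ Q) (c : Q →ₗ[Λ] M)
    (hPU : Module.Projective Λ (Submodule.comap π (range c)))
    (f : ker c →ₗ[Λ] M) :
    ∃ g : Q →ₗ[Λ] M, ∀ x : ker c, g x = f x := by
  classical
  set U := range c with hU
  set PU := Submodule.comap π U with hPU'
  -- π' : PU → U
  have hres : ∀ x ∈ PU, π x ∈ U := fun x hx => hx
  set π' : PU →ₗ[Λ] U := π.restrict hres with hπ'
  have hπ'surj : Function.Surjective π' := by
    rintro ⟨u, hu⟩
    obtain ⟨x, hx⟩ := hπ u
    refine ⟨⟨x, by simp [PU, hx, hu]⟩, ?_⟩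
    apply Subtype.ext
    simpa [π', LinearMap.restrict_apply] using hx
  set c' : Q →ₗ[Λ] U := c.rangeRestrict with hc'
  have hc'surj : Function.Surjective c' := c.surjective_rangeRestrict
  obtain ⟨d, hd⟩ := Module.projective_lifting_property (h := hQ) π' c' hπ'surj
  obtain ⟨e, he⟩ := Module.projective_lifting_property (h := hPU) c' π' hc'surj
  have hd' : ∀ x : Q, π ((d x : PU) : P₀) = c x := by
    intro x
    have := congrArg (fun z => ((z : U) : M)) (congrFun (congrArg (fun φ => φ.toFun) hd) x)
    simpa [π', c', LinearMap.restrict_apply] using this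
  have he' : ∀ y : PU, c (e y) = π (y : P₀) := by
    intro y
    have := congrArg (fun z => ((z : U) : M)) (congrFun (congrArg (fun φ => φ.toFun) he) y)
    simpa [π', c', LinearMap.restrict_apply] using this
  -- inclusion of ker π into PU
  have hKsub : ker π ≤ PU := by
    intro z hz
    simp only [PU, Submodule.mem_comap]
    rw [mem_ker.mp hz]
    exact U.zero_mem
  set ι : ker π →ₗ[Λ] PU := Submodule.inclusion hKsub with hι
  have hει : ∀ z : ker π, c (e (ι z)) = 0 := by
    intro z
    rw [he']
    exact mem_ker.mp z.2
  set ε : ker π →ₗ[Λ] ker c :=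
    LinearMap.codRestrict (ker c) (e ∘ₗ ι) (fun z => mem_ker.mpr (hει z)) with hε
  obtain ⟨gg, hgg⟩ := hstar (f ∘ₗ ε)
  set D : Q →ₗ[Λ] P₀ := PU.subtype ∘ₗ d with hD
  set θ : Q →ₗ[Λ] Q := LinearMap.id - e ∘ₗ (d : Q →ₗ[Λ] PU) with hθ
  have hθker : ∀ x : Q, c (θ x) = 0 := by
    intro x
    simp only [θ, LinearMap.sub_apply, LinearMap.id_apply, LinearMap.comp_apply, map_sub]
    rw [he', hd']
    simp
  set θ' : Q →ₗ[Λ] ker c := LinearMap.codRestrict (ker c) θ (fun x => mem_ker.mpr (hθker x))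
    with hθ'
  refine ⟨gg ∘ₗ D + f ∘ₗ θ', ?_⟩
  rintro ⟨x, hx⟩
  have hDker : D x ∈ ker π := by
    rw [mem_ker, hD, LinearMap.comp_apply, Submodule.subtype_apply, hd']
    exact mem_ker.mp hx
  have h1 : gg (D x) = f (ε ⟨D x, hDker⟩) := hgg ⟨D x, hDker⟩
  have hι2 : ι ⟨D x, hDker⟩ = d x := by
    apply Subtype.ext
    rfl
  have h2 : (ε ⟨D x, hDker⟩ : Q) = e (d x) := by
    simp [ε, hι2]
  have hedx : e (d x) ∈ ker c := by
    rw [mem_ker, he']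
    exact mem_ker.mp hDker
  have h3 : ε ⟨D x, hDker⟩ = ⟨e (d x), hedx⟩ := Subtype.ext h2
  have h4 : θ' x = (⟨x, hx⟩ : ker c) - ⟨e (d x), hedx⟩ := by
    apply Subtype.ext
    simp [θ', θ]
  simp only [LinearMap.add_apply, LinearMap.comp_apply, h1, h3, h4, map_sub]
  abel
/-- Iterated extension: extend from a finite intersection of kernels of maps to `M`
all the way up to `Q`. -/
theorem myIter {Λ : Type} {M : Type*} {P₀ : Type*} {Q : Type*} [Ring Λ] [AddCommGroup M] [Module Λ M]
    [AddCommGroup P₀] [Module Λ P₀] [AddCommGroup Q] [Module Λ Q]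
    (π : P₀ →ₗ[Λ] M) (hπ : Function.Surjective π)
    (hstar : ∀ h : ker π →ₗ[Λ] M, ∃ g : P₀ →ₗ[Λ] M, ∀ x : ker π, g x = h x)
    (hQsub : ∀ N : Submodule Λ Q, Module.Projective Λ N)
    (hP₀sub : ∀ N : Submodule Λ P₀, Module.Projective Λ N)
    (s : Finset (Q →ₗ[Λ] M)) :
    ∀ f : ↥(⨅ c ∈ s, ker c) →ₗ[Λ] M,
      ∃ g : Q →ₗ[Λ] M, ∀ x : ↥(⨅ c ∈ s, ker c), g x = f x := by
  classical
  induction s using Finset.induction_on with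
  | empty =>
    intro f
    refine ⟨f ∘ₗ LinearMap.codRestrict _ LinearMap.id (fun x => by simp), ?_⟩
    intro x
    exact congrArg f (Subtype.ext rfl)
  | @insert a t ha ih =>
    intro f
    set W : Submodule Λ Q := ⨅ c ∈ t, ker c with hW
    have hLW : (⨅ c ∈ insert a t, ker c : Submodule Λ Q) ≤ W := by
      refine le_iInf fun c => le_iInf fun hc => ?_
      exact iInf_le_of_le c (iInf_le_of_le (Finset.mem_insert_of_mem hc) le_rfl)
    have hLa : (⨅ c ∈ insert a t, ker c : Submodule Λ Q) ≤ ker a :=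
      iInf_le_of_le a (iInf_le_of_le (Finset.mem_insert_self a t) le_rfl)
    set c₀ : ↥W →ₗ[Λ] M := a.domRestrict W with hc₀
    have hκmem : ∀ x : ↥(ker c₀), ((x : ↥W) : Q) ∈ (⨅ c ∈ insert a t, ker c : Submodule Λ Q) := by
      rintro ⟨⟨x, hxW⟩, hxk⟩
      simp only [Submodule.mem_iInf, Finset.mem_insert]
      rintro c (rfl | hc)
      · exact mem_ker.mp hxk
      · exact (Submodule.mem_iInf _).mp ((Submodule.mem_iInf _).mp hxW c) hc
    set κ : ↥(ker c₀) →ₗ[Λ] ↥(⨅ c ∈ insert a t, ker c : Submodule Λ Q) :=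
      LinearMap.codRestrict _ (W.subtype ∘ₗ (ker c₀).subtype) hκmem with hκ
    obtain ⟨g', hg'⟩ := myCore π hπ hstar (hQsub W) c₀ (hP₀sub _) (f ∘ₗ κ)
    obtain ⟨g, hg⟩ := ih (g' : ↥W →ₗ[Λ] M)
    refine ⟨g, ?_⟩
    rintro ⟨x, hx⟩
    have hxW : x ∈ W := hLW hx
    have hxk : (⟨x, hxW⟩ : ↥W) ∈ ker c₀ := by
      simpa [c₀] using mem_ker.mp (hLa hx)
    have e1 : g x = g' ⟨x, hxW⟩ := hg ⟨x, hxW⟩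
    have e2 : g' ⟨x, hxW⟩ = f (κ ⟨⟨x, hxW⟩, hxk⟩) := hg' ⟨⟨x, hxW⟩, hxk⟩
    have e3 : κ ⟨⟨x, hxW⟩, hxk⟩ = ⟨x, hx⟩ := Subtype.ext rfl
    rw [e1, e2, e3]


/-- The extension property transfers between projective surjections onto `M`. -/
theorem myTransfer {Λ : Type*} [Ring Λ] {M P P' : Type*} [AddCommGroup M] [Module Λ M]
    [AddCommGroup P] [Module Λ P] [AddCommGroup P'] [Module Λ P']
    (π : P →ₗ[Λ] M) (π' : P' →ₗ[Λ] M) (hπ : Function.Surjective π)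
    (hπ' : Function.Surjective π')
    (hP : Module.Projective Λ P) (hP' : Module.Projective Λ P')
    (hstar : ∀ h : ker π →ₗ[Λ] M, ∃ g : P →ₗ[Λ] M, ∀ x : ker π, g x = h x) :
    ∀ h : ker π' →ₗ[Λ] M, ∃ g : P' →ₗ[Λ] M, ∀ x : ker π', g x = h x := by
  obtain ⟨α, hα⟩ := Module.projective_lifting_property (h := hP') π π' hπ
  obtain ⟨β, hβ⟩ := Module.projective_lifting_property (h := hP) π' π hπ'
  have hαap : ∀ x, π (α x) = π' x := fun x => LinearMap.congr_fun hα x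
  have hβap : ∀ x, π' (β x) = π x := fun x => LinearMap.congr_fun hβ x
  intro h
  have hβker : ∀ x : ker π, β (x : P) ∈ ker π' := by
    intro x
    rw [mem_ker, hβap]
    exact mem_ker.mp x.2
  set βk : ker π →ₗ[Λ] ker π' :=
    LinearMap.codRestrict _ (β ∘ₗ (ker π).subtype) hβker with hβk
  obtain ⟨g₀, hg₀⟩ := hstar (h ∘ₗ βk)
  have hδmem : ∀ x : P', ((LinearMap.id : P' →ₗ[Λ] P') - β ∘ₗ α) x ∈ ker π' := by
    intro x
    rw [mem_ker]
    simp only [LinearMap.sub_apply, LinearMap.id_apply, LinearMap.comp_apply, map_sub]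
    rw [hβap, hαap, sub_self]
  set δ : P' →ₗ[Λ] ker π' := LinearMap.codRestrict _ ((LinearMap.id : P' →ₗ[Λ] P') - β ∘ₗ α) hδmem with hδ
  refine ⟨g₀ ∘ₗ α + h ∘ₗ δ, ?_⟩
  rintro ⟨x, hx⟩
  have hαx : α x ∈ ker π := by
    rw [mem_ker, hαap]
    exact hx
  have h1 : g₀ (α x) = h (βk ⟨α x, hαx⟩) := hg₀ ⟨α x, hαx⟩
  have h2 : βk ⟨α x, hαx⟩ = ⟨β (α x), hβker ⟨α x, hαx⟩⟩ := Subtype.ext rfl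
  have h3 : δ x = (⟨x, hx⟩ : ker π') - ⟨β (α x), hβker ⟨α x, hαx⟩⟩ := by
    apply Subtype.ext
    simp [δ]
  simp only [LinearMap.add_apply, LinearMap.comp_apply, h1, h2, h3, map_sub]
  abel

/-- Transfer the hereditary hypothesis to arbitrary small modules. -/
theorem myHer {H : Type} [Ring H]
    (hher : ∀ P : ModuleCat.{u₂} H, Projective P → ∀ N : Submodule H P,
      Projective (ModuleCat.of H N))
    (P : Type) [AddCommGroup P] [Module H P] (hP : Module.Projective H P)
    (N : Submodule H P) : Module.Projective H N := by
  let e : P ≃ₗ[H] ULift.{u₂} P := ULift.moduleEquiv.symm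
  have hP' : Module.Projective H (ULift.{u₂} P) := Module.Projective.of_equiv e
  have hcat : Projective (ModuleCat.of H (ULift.{u₂} P)) :=
    (IsProjective.iff_projective _).mp hP'
  have hN' : Projective (ModuleCat.of H (N.map (e : P →ₗ[H] ULift.{u₂} P))) :=
    hher _ hcat _
  have hN'' : Module.Projective H (N.map (e : P →ₗ[H] ULift.{u₂} P)) :=
    (IsProjective.iff_projective _).mpr hN'
  exact Module.Projective.of_equiv (e.submoduleMap N).symm


theorem myStar (H : Type) [Ring H] (M : ModuleCat H)
    (hM : Limits.IsZero (ext1 H M M))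
    {P' : Type*} [AddCommGroup P'] [Module H P'] (π' : P' →ₗ[H] M)
    (hπ'surj : Function.Surjective π') (hP' : Module.Projective H P') :
    ∀ h : ker π' →ₗ[H] M, ∃ g : P' →ₗ[H] M, ∀ x : ker π', g x = h x := by
  obtain ⟨P⟩ := (HasProjectiveResolution.out (Z := M))
  set P₀ := P.complex.X 0 with hP₀
  set d10 : P.complex.X 1 ⟶ P₀ := P.complex.d 1 0 with hd10
  set d21 : P.complex.X 2 ⟶ P.complex.X 1 := P.complex.d 2 1 with hd21
  set π : P₀ →ₗ[H] M := (P.π.f 0 : P₀ ⟶ ((ChainComplex.single₀ (ModuleCat H)).obj M).X 0).hom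
    with hπdef
  have hπepi : Epi (P.π.f 0) := inferInstance
  have hπsurj : Function.Surjective π := by
    have := (ModuleCat.epi_iff_surjective (P.π.f 0)).mp hπepi
    exact this
  -- d10 ≫ π = 0, elementwise
  have hdπ : ∀ y, π (d10 y) = 0 := by
    intro y
    have h0 : d10 ≫ P.π.f 0 = 0 := P.complex_d_comp_π_f_zero
    show (d10 ≫ P.π.f 0) y = 0
    rw [h0]; rfl
  -- ker π = range d10
  have hker : ∀ x : P₀, x ∈ ker π ↔ x ∈ range d10.hom := by
    have hco := P.isColimitCokernelCofork
    have hco2 := ModuleCat.cokernelIsColimit (d10 : P.complex.X 1 ⟶ P₀)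
    set e := hco.coconePointUniqueUpToIso hco2 with he
    have hcomm : P.π.f 0 ≫ e.hom = ModuleCat.ofHom (range d10.hom).mkQ := by
      exact hco.comp_coconePointUniqueUpToIso_hom hco2 Limits.WalkingParallelPair.one
    have hinj : Function.Injective e.hom := by
      intro a b hab
      calc a = e.inv (e.hom a) := (e.hom_inv_id_apply a).symm
      _ = e.inv (e.hom b) := by rw [hab]
      _ = b := e.hom_inv_id_apply b
    intro x
    constructor
    · intro hx
      have h1 : (range d10.hom).mkQ x = e.hom (π x) := by
        show _ = (P.π.f 0 ≫ e.hom) x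
        rw [hcomm]; rfl
      have h0x : e.hom (π x) = 0 :=
        (congrArg (fun z => ConcreteCategory.hom e.hom z) (show π x = 0 from mem_ker.mp hx)).trans (map_zero (ConcreteCategory.hom e.hom))
      rw [h0x] at h1
      rw [← Submodule.Quotient.mk_eq_zero]
      exact h1
    · rintro ⟨y, rfl⟩
      exact mem_ker.mpr (hdπ y)
  -- exactness at 1 of the resolution
  have hex1 : ∀ x : P.complex.X 1, d10 x = 0 → ∃ y : P.complex.X 2, d21 y = x := by
    have h := (HomologicalComplex.exactAt_iff' P.complex 2 1 0 (by simp) (by simp)).mp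
      (P.complex_exactAt_succ 0)
    exact (ShortComplex.moduleCat_exact_iff _).mp h
  -- vanishing of Ext¹ gives exactness of the Hom complex at 1
  have hz : Limits.IsZero ((P.complex.linearYonedaObj ℤ M).homology 1) :=
    Limits.IsZero.of_iso hM (P.isoExt 1 M).symm
  have hhex : ∀ (x : (P.complex.X 1 ⟶ M)), (d21 ≫ x = 0) →
      ∃ g : (P₀ ⟶ M), d10 ≫ g = x := by
    have hx1 := (HomologicalComplex.exactAt_iff_isZero_homology _ 1).mpr hz
    have h := (HomologicalComplex.exactAt_iff' (P.complex.linearYonedaObj ℤ M) 0 1 2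
      (by simp) (by simp)).mp hx1
    have h2 := (ShortComplex.moduleCat_exact_iff _).mp h
    intro x hx
    exact h2 x hx
  have hP₀ : Module.Projective H P₀ := by
    have := P.projective 0
    exact (IsProjective.iff_projective _).mpr this
  refine myTransfer π π' hπsurj hπ'surj hP₀ hP' ?_
  intro h
  have hd'mem : ∀ y : P.complex.X 1, d10 y ∈ ker π := fun y => mem_ker.mpr (hdπ y)
  set d' : P.complex.X 1 →ₗ[H] ker π := LinearMap.codRestrict (ker π) d10.hom hd'mem with hd'
  set h' : P.complex.X 1 ⟶ M := ModuleCat.ofHom (h ∘ₗ d' : P.complex.X 1 →ₗ[H] M) with hh'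
  have hcond : d21 ≫ h' = 0 := by
    apply ModuleCat.hom_ext; apply LinearMap.ext
    intro y
    have hz0 : d' (d21 y) = 0 := by
      apply Subtype.ext
      have : d10 (d21 y) = 0 := by
        calc d10 (d21 y) = (d21 ≫ d10) y := rfl
        _ = (0 : P.complex.X 2 ⟶ P₀) y := by rw [P.complex.d_comp_d 2 1 0]
        _ = 0 := rfl
      exact this
    calc (d21 ≫ h') y = h (d' (d21 y)) := rfl
    _ = h 0 := by rw [hz0]
    _ = 0 := map_zero h
  obtain ⟨g, hg⟩ := hhex h' hcond
  refine ⟨g.hom, ?_⟩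
  rintro ⟨x, hx⟩
  obtain ⟨y, hy⟩ := (hker x).mp hx
  have h1 : g.hom x = h' y := by
    rw [← hy]
    calc g (d10 y) = (d10 ≫ g) y := rfl
    _ = h' y := by rw [hg]
  rw [h1]
  show h (d' y) = h ⟨x, hx⟩
  congr 1
  exact Subtype.ext hy


theorem stmt2 (k : Type) [Field k] (H : Type) [Ring H] [Algebra k H]
    [FiniteDimensional k H]
    (hher : ∀ P : ModuleCat H, Projective P →
      ∀ N : Submodule H P, Projective (ModuleCat.of H N))
    (M X : ModuleCat H) [Module.Finite H M] [Module.Finite H X]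
    (hM : Limits.IsZero (ext1 H M M)) :
    ∀ f : ↥(reject H M X) →ₗ[H] M, f = 0 := by
  classical
  -- set up k-module structures via restriction of scalars
  letI : Module k ↑M := Module.compHom ↑M (algebraMap k H)
  letI : Module k ↑X := Module.compHom ↑X (algebraMap k H)
  have hsmulM : ∀ (a : k) (m : ↑M), a • m = algebraMap k H a • m := fun _ _ => rfl
  have hsmulX : ∀ (a : k) (x : ↑X), a • x = algebraMap k H a • x := fun _ _ => rfl
  haveI : IsScalarTower k H ↑M := ⟨fun a h m => by
    rw [Algebra.smul_def, mul_smul, hsmulM]⟩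
  haveI : IsScalarTower k H ↑X := ⟨fun a h x => by
    rw [Algebra.smul_def, mul_smul, hsmulX]⟩
  haveI : SMulCommClass H k ↑M := ⟨fun h a m => by
    rw [hsmulM, hsmulM, ← mul_smul, ← Algebra.commutes a h, mul_smul]⟩
  haveI : SMulCommClass H k ↑X := ⟨fun h a x => by
    rw [hsmulX, hsmulX, ← mul_smul, ← Algebra.commutes a h, mul_smul]⟩
  haveI : Module.Finite k ↑M := Module.Finite.trans H ↑M
  haveI : Module.Finite k ↑X := Module.Finite.trans H ↑X
  haveI : Module.Finite k (↑X →ₗ[k] ↑M) := Module.Finite.linearMap k k ↑X ↑M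
  haveI : IsNoetherian k (↑X →ₗ[k] ↑M) := IsNoetherian.iff_fg.mpr inferInstance
  haveI hfinHom : Module.Finite k (↑X →ₗ[H] ↑M) :=
    Module.Finite.of_injective (LinearMap.restrictScalarsₗ k H ↑X ↑M k)
      (LinearMap.restrictScalars_injective k)
  obtain ⟨s, hs⟩ := Module.finite_def.mp hfinHom
  -- finite free presentations
  obtain ⟨n, πM, hπM⟩ := Module.Finite.exists_fin' H ↑M
  obtain ⟨m, q, hq⟩ := Module.Finite.exists_fin' H ↑X
  have hstar' := myStar H M hM πM hπM inferInstance
  have herQ : ∀ N : Submodule H (Fin m → H), Module.Projective H ↥N :=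
    fun N => myHer hher _ inferInstance N
  have herP : ∀ N : Submodule H (Fin n → H), Module.Projective H ↥N :=
    fun N => myHer hher _ inferInstance N
  set s' : Finset ((Fin m → H) →ₗ[H] ↑M) := s.image (fun f => f ∘ₗ q) with hs'
  set L : Submodule H (Fin m → H) := ⨅ c ∈ s', ker c with hL
  have hall : ∀ (g : ↑X →ₗ[H] ↑M), ∀ x, x ∈ L → g (q x) = 0 := by
    intro g
    have hgmem : g ∈ Submodule.span k (↑s : Set (↑X →ₗ[H] ↑M)) := by
      rw [hs]; exact Submodule.mem_top
    induction hgmem using Submodule.span_induction with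
    | mem g hgs =>
      intro x hx
      have hmem : g ∘ₗ q ∈ s' := Finset.mem_image_of_mem _ hgs
      have h1 := (Submodule.mem_iInf _).mp hx (g ∘ₗ q)
      have h2 := (Submodule.mem_iInf _).mp h1 hmem
      exact mem_ker.mp h2
    | zero => intro x _; rfl
    | add g₁ g₂ _ _ h₁ h₂ =>
      intro x hx
      rw [LinearMap.add_apply, h₁ x hx, h₂ x hx, add_zero]
    | smul a g _ hg =>
      intro x hx
      rw [LinearMap.smul_apply, hg x hx, smul_zero]
  have key1 : ∀ x : Fin m → H, x ∈ L ↔ q x ∈ reject H M X := by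
    intro x
    constructor
    · intro hx
      have : q x ∈ (⨅ f : ↑X →ₗ[H] ↑M, ker f : Submodule H ↑X) :=
        (Submodule.mem_iInf _).mpr (fun g => mem_ker.mpr (hall g x hx))
      exact this
    · intro hqx
      have hqx' : q x ∈ (⨅ f : ↑X →ₗ[H] ↑M, ker f : Submodule H ↑X) := hqx
      refine (Submodule.mem_iInf _).mpr fun c => (Submodule.mem_iInf _).mpr fun hc => ?_
      obtain ⟨g, hgs, rfl⟩ := Finset.mem_image.mp hc
      exact mem_ker.mpr (mem_ker.mp ((Submodule.mem_iInf _).mp hqx' g))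
  intro f
  set fL : ↥L →ₗ[H] ↑M :=
    f ∘ₗ (LinearMap.codRestrict (reject H M X) (q ∘ₗ L.subtype)
      (fun x => (key1 x.1).mp x.2)) with hfL
  obtain ⟨g, hg⟩ := myIter πM hπM hstar' herQ herP s' fL
  have hkerq : ∀ x ∈ ker q, g x = 0 := by
    intro x hx
    have hxL : x ∈ L := (key1 x).mpr (by
      rw [mem_ker.mp hx]; exact Submodule.zero_mem _)
    have e1 : g x = fL ⟨x, hxL⟩ := hg ⟨x, hxL⟩
    have e2 : fL ⟨x, hxL⟩ = f ⟨q x, (key1 x).mp hxL⟩ := rfl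
    have e3 : (⟨q x, (key1 x).mp hxL⟩ : ↥(reject H M X)) = 0 :=
      Subtype.ext (mem_ker.mp hx)
    rw [e1, e2, e3, map_zero]
  set e := q.quotKerEquivOfSurjective hq with he
  set gbar : ↑X →ₗ[H] ↑M :=
    ((ker q).liftQ g (fun x hx => mem_ker.mpr (hkerq x hx))) ∘ₗ
      (e.symm : ↑X →ₗ[H] ((Fin m → H) ⧸ ker q)) with hgbar
  have hgbarq : ∀ w, gbar (q w) = g w := by
    intro w
    have h1 : e (Submodule.Quotient.mk w) = q w := by
      simp [he, LinearMap.quotKerEquivOfSurjective, LinearMap.quotKerEquivRange_apply_mk]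
    have h2 : e.symm (q w) = Submodule.Quotient.mk w := by
      rw [LinearEquiv.symm_apply_eq, h1]
    show ((ker q).liftQ g (fun x hx => mem_ker.mpr (hkerq x hx))) (e.symm (q w)) = g w
    rw [h2, Submodule.liftQ_apply]
  apply LinearMap.ext
  rintro ⟨x, hx⟩
  obtain ⟨w, hw⟩ := hq x
  have hwL : w ∈ L := (key1 w).mpr (by rw [hw]; exact hx)
  have hx' : x ∈ (⨅ f : ↑X →ₗ[H] ↑M, ker f : Submodule H ↑X) := hx
  have e0 : gbar x = 0 := mem_ker.mp ((Submodule.mem_iInf _).mp hx' gbar)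
  have e1 : f ⟨x, hx⟩ = fL ⟨w, hwL⟩ := by
    have : (⟨q w, (key1 w).mp hwL⟩ : ↥(reject H M X)) = ⟨x, hx⟩ := Subtype.ext hw
    rw [hfL]
    show f ⟨x, hx⟩ = f ⟨q w, (key1 w).mp hwL⟩
    rw [this]
  rw [LinearMap.zero_apply, e1, ← hg ⟨w, hwL⟩, ← hgbarq w, hw]
  exact e0
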